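/- Let p ≥ 2 and m ≤ −1 be integers, and let Q(p,m) be the p×p symmetric integer matrix with diagonal entries (−(p+2), −2, …, −2, m−1) (with p−2 entries equal to −2), entries 1 on the super- and sub-diagonal, and 0 elsewhere. Then there is no vector v ∈ ℤ^p with vᵀ Q(p,m) v = −1. -/

import Mathlib

open Finset

/-- The `p × p` symmetric integer matrix with diagonal entries
`(-(p+2), -2, …, -2, m-1)` (with `p-2` entries equal to `-2`),
entries `1` on the super- and sub-diagonal, and `0` elsewhere. -/
def Qmat (p : ℕ) (m : ℤ) : Matrix (Fin p) (Fin p) ℤ :=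
  Matrix.of fun i j =>
    if i = j then
      if (i : ℕ) = 0 then -((p : ℤ) + 2)
      else if (i : ℕ) = p - 1 then m - 1
      else -2
    else if (i : ℕ) + 1 = (j : ℕ) ∨ (j : ℕ) + 1 = (i : ℕ) then 1
    else 0

set_option maxHeartbeats 1000000 in
theorem Qmat_no_minus_one_class_negdef (p : ℕ) (hp : 2 ≤ p) (m : ℤ) (hm : m ≤ -1) :
    ¬ ∃ v : Fin p → ℤ, dotProduct v ((Qmat p m).mulVec v) = -1 := by
  rintro ⟨v, hv⟩
  obtain ⟨k, rfl⟩ : ∃ k, p = k + 2 := ⟨p - 2, by omega⟩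
  set w : ℕ → ℤ := fun n => if h : n < k + 2 then v ⟨n, h⟩ else 0 with hwdef
  have hw0 : ∀ n, k + 2 ≤ n → w n = 0 := fun n hn => dif_neg (by omega)
  have hvw : ∀ i : Fin (k + 2), v i = w (i : ℕ) := by
    intro i
    simp only [hwdef, dif_pos i.isLt]
  set dd : ℕ → ℤ := fun i => if i = 0 then -((k : ℤ) + 4) else if i = k + 1 then m - 1 else -2
    with hdd
  set q : ℕ → ℕ → ℤ := fun i j =>
    (if i = j then dd i else 0) + (if i + 1 = j then 1 else 0) + (if j + 1 = i then 1 else 0)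
    with hqdef
  have hq : ∀ i j : Fin (k + 2), Qmat (k + 2) m i j = q (i : ℕ) (j : ℕ) := by
    intro i j
    have hij : (i = j) ↔ ((i : ℕ) = (j : ℕ)) := Fin.ext_iff
    simp only [Qmat, Matrix.of_apply, hij, hqdef, hdd]
    split_ifs <;> omega
  have hQv : ∀ i : Fin (k + 2), ((Qmat (k + 2) m).mulVec v) i
      = ∑ j ∈ range (k + 2), q (i : ℕ) j * w j := by
    intro i
    rw [Matrix.mulVec, dotProduct]
    rw [show (fun j : Fin (k + 2) => Qmat (k + 2) m i j * v j)
        = fun j : Fin (k + 2) => q (i : ℕ) (j : ℕ) * w (j : ℕ) from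
      funext fun j => by rw [hq, hvw]]
    exact Fin.sum_univ_eq_sum_range (fun j => q (i : ℕ) j * w j) (k + 2)
  have hDP : dotProduct v ((Qmat (k + 2) m).mulVec v)
      = ∑ i ∈ range (k + 2), ∑ j ∈ range (k + 2), w i * (q i j * w j) := by
    rw [dotProduct]
    rw [show (fun i : Fin (k + 2) => v i * ((Qmat (k + 2) m).mulVec v) i)
        = fun i : Fin (k + 2) => w (i : ℕ) * ∑ j ∈ range (k + 2), q (i : ℕ) j * w j from
      funext fun i => by rw [hQv, hvw]]
    rw [Fin.sum_univ_eq_sum_range (fun i => w i * ∑ j ∈ range (k + 2), q i j * w j) (k + 2)]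
    exact Finset.sum_congr rfl fun i _ => Finset.mul_sum _ _ _
  -- split the double sum
  have hpt : ∀ i j : ℕ, w i * (q i j * w j)
      = (if i = j then dd i * (w i * w j) else 0)
        + (if i + 1 = j then w i * w j else 0)
        + (if j + 1 = i then w i * w j else 0) := by
    intro i j
    simp only [hqdef]
    split_ifs <;> ring
  have hA : dotProduct v ((Qmat (k + 2) m).mulVec v)
      = ∑ i ∈ range (k + 2), dd i * w i ^ 2
        + 2 * ∑ i ∈ range (k + 2), w i * w (i + 1) := by
    rw [hDP]
    have h1 : ∀ i ∈ range (k + 2),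
        ∑ j ∈ range (k + 2), w i * (q i j * w j)
          = dd i * w i ^ 2 + w i * w (i + 1)
            + ∑ j ∈ range (k + 2), (if j + 1 = i then w i * w j else 0) := by
      intro i hi
      have : ∑ j ∈ range (k + 2), w i * (q i j * w j)
          = ∑ j ∈ range (k + 2), ((if i = j then dd i * (w i * w j) else 0)
              + (if i + 1 = j then w i * w j else 0)
              + (if j + 1 = i then w i * w j else 0)) :=
        Finset.sum_congr rfl fun j _ => hpt i j
      rw [this, Finset.sum_add_distrib, Finset.sum_add_distrib]
      congr 1
      congr 1
      · rw [Finset.sum_ite_eq, if_pos hi]; ring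
      · rw [Finset.sum_ite_eq]
        split_ifs with h
        · rfl
        · rw [hw0 (i + 1) (by simp at h ⊢; omega)]; ring
    rw [Finset.sum_congr rfl h1, Finset.sum_add_distrib, Finset.sum_add_distrib]
    have h2 : ∑ i ∈ range (k + 2), ∑ j ∈ range (k + 2), (if j + 1 = i then w i * w j else 0)
        = ∑ i ∈ range (k + 2), w i * w (i + 1) := by
      rw [Finset.sum_comm]
      refine Finset.sum_congr rfl fun j hj => ?_
      have : ∑ i ∈ range (k + 2), (if j + 1 = i then w i * w j else 0)
          = if j + 1 ∈ range (k + 2) then w (j + 1) * w j else 0 := Finset.sum_ite_eq _ _ _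
      rw [this]
      split_ifs with h
      · ring
      · rw [hw0 (j + 1) (by simp at h ⊢; omega)]; ring
    rw [h2]; ring
  -- completing squares
  have e1 : ∑ i ∈ range (k + 1), (w i - w (i + 1)) ^ 2
      = (∑ i ∈ range (k + 1), w i ^ 2) + (∑ i ∈ range (k + 1), w (i + 1) ^ 2)
        - 2 * ∑ i ∈ range (k + 1), w i * w (i + 1) := by
    rw [Finset.mul_sum, ← Finset.sum_add_distrib, ← Finset.sum_sub_distrib]
    exact Finset.sum_congr rfl fun i _ => by ring
  have hB : ∑ i ∈ range (k + 2), dd i * w i ^ 2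
        + 2 * ∑ i ∈ range (k + 2), w i * w (i + 1)
      = -(((k : ℤ) + 3) * w 0 ^ 2 + (∑ i ∈ range (k + 1), (w i - w (i + 1)) ^ 2)
          + (-m) * w (k + 1) ^ 2) := by
    have hd1 : ∑ i ∈ range (k + 2), dd i * w i ^ 2
        = (-2) * (∑ i ∈ range k, w (i + 1) ^ 2) + (m - 1) * w (k + 1) ^ 2
          + (-((k : ℤ) + 4)) * w 0 ^ 2 := by
      rw [Finset.sum_range_succ' (fun i => dd i * w i ^ 2) (k + 1), Finset.sum_range_succ]
      have : ∀ i ∈ range k, dd (i + 1) * w (i + 1) ^ 2 = (-2) * w (i + 1) ^ 2 := by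
        intro i hi
        simp only [Finset.mem_range] at hi
        simp only [hdd]
        rw [if_neg (by omega), if_neg (by omega)]
      rw [Finset.sum_congr rfl this, ← Finset.mul_sum]
      simp only [hdd]
      norm_num
    have hd2 : ∑ i ∈ range (k + 2), w i * w (i + 1)
        = ∑ i ∈ range (k + 1), w i * w (i + 1) := by
      rw [Finset.sum_range_succ, hw0 (k + 2) le_rfl]; ring
    have hd3 : ∑ i ∈ range (k + 1), w i ^ 2
        = (∑ i ∈ range k, w (i + 1) ^ 2) + w 0 ^ 2 :=
      Finset.sum_range_succ' (fun i => w i ^ 2) k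
    have hd4 : ∑ i ∈ range (k + 1), w (i + 1) ^ 2
        = (∑ i ∈ range k, w (i + 1) ^ 2) + w (k + 1) ^ 2 :=
      Finset.sum_range_succ (fun i => w (i + 1) ^ 2) k
    rw [hd1, hd2, e1, hd3, hd4]
    ring
  set T : ℤ := ∑ i ∈ range (k + 1), (w i - w (i + 1)) ^ 2 with hT
  have key : ((k : ℤ) + 3) * w 0 ^ 2 + T + (-m) * w (k + 1) ^ 2 = 1 := by
    rw [hA, hB] at hv
    linarith
  have hT0 : 0 ≤ T := Finset.sum_nonneg fun i _ => sq_nonneg _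
  have habs : |w 0 - w (k + 1)| ≤ T := by
    have htel : ∑ i ∈ range (k + 1), (w i - w (i + 1)) = w 0 - w (k + 1) :=
      Finset.sum_range_sub' w (k + 1)
    calc |w 0 - w (k + 1)| = |∑ i ∈ range (k + 1), (w i - w (i + 1))| := by rw [htel]
      _ ≤ ∑ i ∈ range (k + 1), |w i - w (i + 1)| := Finset.abs_sum_le_sum_abs _ _
      _ ≤ T := Finset.sum_le_sum fun i _ => by
          rcases eq_or_ne (w i - w (i + 1)) 0 with h | h
          · simp [h]
          · nlinarith [Int.one_le_abs h, sq_abs (w i - w (i + 1)), abs_nonneg (w i - w (i + 1))]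
  have hk0 : (0 : ℤ) ≤ (k : ℤ) := Int.natCast_nonneg k
  have hmw : 0 ≤ (-m) * w (k + 1) ^ 2 := mul_nonneg (by linarith) (sq_nonneg _)
  have hw00 : w 0 = 0 := by
    by_contra h
    have h1 : 1 ≤ w 0 ^ 2 := by nlinarith [Int.one_le_abs h, sq_abs (w 0), abs_nonneg (w 0)]
    nlinarith [mul_le_mul_of_nonneg_left h1 (show (0:ℤ) ≤ (k:ℤ) + 3 by linarith)]
  rcases eq_or_ne (w (k + 1)) 0 with hz | hz
  · have hT1 : T = 1 := by rw [hw00, hz] at key; linarith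
    have htel : ∑ i ∈ range (k + 1), (w i - w (i + 1)) = 0 := by
      rw [Finset.sum_range_sub' w (k + 1), hw00, hz]; ring
    have sq2 : ∀ x : ZMod 2, x ^ 2 = x := by decide
    have h2 : ((∑ i ∈ range (k + 1), (w i - w (i + 1)) ^ 2 : ℤ) : ZMod 2)
        = ((∑ i ∈ range (k + 1), (w i - w (i + 1)) : ℤ) : ZMod 2) := by
      push_cast
      exact Finset.sum_congr rfl fun i _ => sq2 _
    rw [← hT, hT1, htel] at h2
    norm_num at h2
  · have h1 : 1 ≤ w (k + 1) ^ 2 := by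
      nlinarith [Int.one_le_abs hz, sq_abs (w (k + 1)), abs_nonneg (w (k + 1))]
    have h2 : 1 ≤ (-m) * w (k + 1) ^ 2 := by nlinarith
    have h3 : (1 : ℤ) ≤ T := by
      have := habs
      rw [hw00] at this
      simp only [zero_sub, abs_neg] at this
      linarith [Int.one_le_abs hz]
    nlinarith [mul_nonneg (show (0:ℤ) ≤ (k:ℤ) + 3 by linarith) (sq_nonneg (w 0))]
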